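/- Let p ≥ 4 be a real number. Then for all x, y ∈ ℝ: |x·(1+x²)^{1/p} − y·(1+y²)^{1/p}| ≤ (3/2)·|x−y|·∫₀¹ (1 + (y + θ(x−y))²)^{1/p} dθ. -/

import Mathlib

open MeasureTheory

/-- Inequality (eq:gam_dif) in Appendix A of the paper. -/
theorem stmt_14 (p : ℝ) (hp : 4 ≤ p) (x y : ℝ) :
    |x * (1 + x ^ 2) ^ (1 / p) - y * (1 + y ^ 2) ^ (1 / p)| ≤
      3 / 2 * |x - y| *
        ∫ θ in (0:ℝ)..1, (1 + (y + θ * (x - y)) ^ 2) ^ (1 / p) := by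
  have hp0 : 0 < p := lt_of_lt_of_le (by norm_num) hp
  set c := x - y with hc
  have hpos : ∀ t : ℝ, (0:ℝ) < 1 + t ^ 2 := fun t => by positivity
  set D : ℝ → ℝ := fun t => (1 + t^2) ^ (1/p) + t * ((2*t) * (1/p) * (1 + t^2) ^ (1/p - 1)) with hD
  -- derivative of F t = t * (1+t^2)^(1/p)
  have hF : ∀ t : ℝ, HasDerivAt (fun s => s * (1 + s^2) ^ (1/p)) (D t) t := by
    intro t
    have h1 : HasDerivAt (fun s : ℝ => 1 + s^2) (2*t) t := by
      simpa using ((hasDerivAt_pow 2 t).const_add 1)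
    have h2 : HasDerivAt (fun s : ℝ => (1 + s^2) ^ (1/p))
        ((2*t) * (1/p) * (1 + t^2) ^ (1/p - 1)) t :=
      h1.rpow_const (Or.inl (hpos t).ne')
    have := (hasDerivAt_id' t).mul h2
    simp only [one_mul] at this
    exact this
  -- derivative of g θ = F (y + θ c)
  have hg : ∀ θ : ℝ, HasDerivAt (fun θ : ℝ => (y + θ*c) * (1 + (y + θ*c)^2) ^ (1/p))
      (D (y + θ*c) * c) θ := by
    intro θ
    have hin : HasDerivAt (fun θ : ℝ => y + θ*c) c θ := by
      simpa using ((hasDerivAt_id θ).mul_const c).const_add y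
    exact (hF (y + θ*c)).comp θ hin
  have hDcont : Continuous D := by
    have h1 : Continuous fun t : ℝ => (1 + t^2) ^ (1/p) :=
      (continuous_const.add (continuous_pow 2)).rpow_const fun t => Or.inl (hpos t).ne'
    have h2 : Continuous fun t : ℝ => (1 + t^2) ^ (1/p - 1) :=
      (continuous_const.add (continuous_pow 2)).rpow_const fun t => Or.inl (hpos t).ne'
    rw [hD]; continuity
  have hcont : Continuous fun θ : ℝ => D (y + θ*c) * c :=
    (hDcont.comp (by continuity)).mul continuous_const
  have key : ∫ θ in (0:ℝ)..1, D (y + θ*c) * c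
      = x * (1 + x^2) ^ (1/p) - y * (1 + y^2) ^ (1/p) := by
    have := intervalIntegral.integral_eq_sub_of_hasDerivAt
      (f := fun θ : ℝ => (y + θ*c) * (1 + (y + θ*c)^2) ^ (1/p))
      (f' := fun θ : ℝ => D (y + θ*c) * c)
      (a := 0) (b := 1)
      (fun t _ => hg t) (hcont.intervalIntegrable 0 1)
    rw [this]
    norm_num [hc]
  -- pointwise bound
  have hDnn : ∀ u : ℝ, 0 ≤ D u := by
    intro u
    have : D u = (1 + u^2) ^ (1/p) + (2*u^2) * (1/p) * (1 + u^2) ^ (1/p - 1) := by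
      rw [hD]; ring
    rw [this]; positivity
  have hDle : ∀ u : ℝ, D u ≤ 3/2 * (1 + u^2) ^ (1/p) := by
    intro u
    have heq : (1 + u^2) ^ (1/p - 1) * (1 + u^2) = (1 + u^2) ^ (1/p) := by
      rw [← Real.rpow_add_one (hpos u).ne']; ring_nf
    have hD' : D u = (1 + u^2) ^ (1/p) + (2/p) * (u^2 * (1 + u^2) ^ (1/p - 1)) := by
      rw [hD]; ring
    rw [hD']
    have h1 : u^2 * (1 + u^2) ^ (1/p - 1) ≤ (1 + u^2) ^ (1/p) := by
      calc u^2 * (1 + u^2) ^ (1/p - 1) ≤ (1 + u^2) * (1 + u^2) ^ (1/p - 1) := by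
            gcongr
            all_goals nlinarith [sq_nonneg u, Real.rpow_nonneg (hpos u).le (1/p-1)]
        _ = (1 + u^2) ^ (1/p) := by rw [mul_comm]; exact heq
    have h2 : (2:ℝ)/p ≤ 1/2 := by
      rw [div_le_div_iff₀ hp0 (by norm_num)]; linarith
    have hr : 0 ≤ (1 + u^2) ^ (1/p) := Real.rpow_nonneg (hpos u).le _
    have h3 : (2/p) * (u^2 * (1 + u^2) ^ (1/p - 1)) ≤ (1/2) * (1 + u^2) ^ (1/p) := by
      apply mul_le_mul h2 h1 (by positivity) (by norm_num)
    linarith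
  have bound : ∀ θ : ℝ, |D (y + θ*c) * c| ≤ 3/2 * (1 + (y + θ*c)^2) ^ (1/p) * |c| := by
    intro θ
    rw [abs_mul, abs_of_nonneg (hDnn _)]
    exact mul_le_mul_of_nonneg_right (hDle _) (abs_nonneg c)
  calc |x * (1 + x ^ 2) ^ (1 / p) - y * (1 + y ^ 2) ^ (1 / p)|
      = |∫ θ in (0:ℝ)..1, D (y + θ*c) * c| := by rw [key]
    _ ≤ ∫ θ in (0:ℝ)..1, |D (y + θ*c) * c| := by
        exact intervalIntegral.abs_integral_le_integral_abs (by norm_num)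
    _ ≤ ∫ θ in (0:ℝ)..1, 3/2 * (1 + (y + θ*c)^2) ^ (1/p) * |c| := by
        apply intervalIntegral.integral_mono_on (by norm_num)
        · exact hcont.abs.intervalIntegrable 0 1
        · have : Continuous fun θ : ℝ => 3/2 * (1 + (y + θ*c)^2) ^ (1/p) * |c| := by
            apply Continuous.mul _ continuous_const
            apply Continuous.mul continuous_const
            exact (Continuous.rpow_const (by continuity) fun t => Or.inl (hpos _).ne')
          exact this.intervalIntegrable 0 1
        · exact fun t _ => bound t
    _ = 3/2 * |c| * ∫ θ in (0:ℝ)..1, (1 + (y + θ*c)^2) ^ (1/p) := by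
        rw [← intervalIntegral.integral_const_mul]
        congr 1; ext θ; ring
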